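/- (Abstract t-structure form of the paper's octahedron lemma identifying f with τ^{≥0}e.) Let D be a triangulated category with suspension Σ and a t-structure (D^{≤0}, D^{≥0}) with heart H = D^{≤0} ∩ D^{≥0}, and let n ≥ 1 be an integer. Let u', u'', m'' be objects of H, and suppose given a distinguished triangle Σ^{-n}u'' ⊕ m'' →(φ'', μ'') u' → e → Σ(Σ^{-n}u'' ⊕ m''), whose first map has components φ'' : Σ^{-n}u'' → u' and μ'' : m'' → u'. Let μ' : u' → b' be a morphism in H that is a cokernel of μ'' in the heart H. Then for every distinguished triangle Σ^{-n}u'' →μ'∘φ'' b' → f → Σ^{1-n}u'', the object f is isomorphic to τ^{≥0}e. -/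

import Mathlib

open CategoryTheory Limits Pretriangulated Triangulated

section Aux

variable {D : Type*} [Category D] [Preadditive D] [HasZeroObject D] [HasShift D ℤ]
  [∀ n : ℤ, (shiftFunctor D n).Additive] [Pretriangulated D]

lemma aux_zero (t : TStructure D) {X Y : D} (f : X ⟶ Y) (a b : ℤ) (hab : a < b)
    (hX : t.le a X) (hY : t.ge b Y) : f = 0 := by
  have h1 : t.le 0 (X⟦a⟧) := t.le_shift a a 0 (by omega) X hX
  have h2 : t.ge 1 (Y⟦a⟧) :=
    t.ge_antitone (by omega : (1:ℤ) ≤ b - a) _ (t.ge_shift b a (b - a) (by omega) Y hY)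
  have h3 : (shiftFunctor D a).map f = 0 := t.zero' _ h1 h2
  apply (shiftFunctor D a).map_injective
  rw [h3, Functor.map_zero]

lemma aux_ge_ext (t : TStructure D) (n : ℤ) (T : Triangle D) (hT : T ∈ distTriang D)
    (h₁ : t.ge n T.obj₁) (h₃ : t.ge n T.obj₃) : t.ge n T.obj₂ := by
  obtain ⟨X, Y, hX, hY, a, b, c, hTr⟩ := t.exists_triangle T.obj₂ (n-1) n (by omega)
  have ha2 : a ≫ T.mor₂ = 0 := aux_zero t _ (n-1) n (by omega) hX h₃
  obtain ⟨g, hg⟩ := Triangle.coyoneda_exact₂ T hT a ha2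
  have hg0 : g = 0 := aux_zero t g (n-1) n (by omega) hX h₁
  have ha : a = 0 := by rw [hg, hg0, zero_comp]
  obtain ⟨q, hq'⟩ : ∃ q : Y ⟶ T.obj₂, 𝟙 T.obj₂ = b ≫ q :=
    Triangle.yoneda_exact₂ _ hTr (𝟙 T.obj₂) (by simp [ha]; exact zero_comp)
  have hq2 : q ≫ b = 𝟙 Y := by
    have hz : b ≫ (q ≫ b - 𝟙 Y) = 0 := by
      rw [Preadditive.comp_sub, ← Category.assoc, ← hq', Category.id_comp, Category.comp_id, sub_self]
    obtain ⟨g', hg''⟩ : ∃ g' : X⟦(1:ℤ)⟧ ⟶ Y, q ≫ b - 𝟙 Y = c ≫ g' :=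
      Triangle.yoneda_exact₃ _ hTr (q ≫ b - 𝟙 Y) hz
    have hg'0 : g' = 0 := aux_zero t g' (n-2) n (by omega)
      (t.le_shift (n-1) 1 (n-2) (by omega) _ hX) hY
    have : q ≫ b - 𝟙 Y = 0 := by rw [hg'', hg'0, comp_zero]
    rwa [sub_eq_zero] at this
  exact ((t.ge n).prop_iff_of_iso ⟨b, q, hq'.symm, hq2⟩).2 hY


lemma aux_coker (t : TStructure D) {m'' u' b' : D}
    (hm : t.le 0 m'') (hu : t.le 0 u') (hb : t.le 0 b')
    {μ'' : m'' ⟶ u'} {μ' : u' ⟶ b'}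
    (hcoker : ∀ (z : D), (t.le 0 z ∧ t.ge 0 z) → ∀ (g : u' ⟶ z), μ'' ≫ g = 0 →
      ∃! h : b' ⟶ z, μ' ≫ h = g)
    (y : D) (hy : t.ge 0 y) :
    (∀ (c : b' ⟶ y), μ' ≫ c = 0 → c = 0) ∧
    (∀ (g : u' ⟶ y), μ'' ≫ g = 0 → ∃ b : b' ⟶ y, μ' ≫ b = g) := by
  obtain ⟨y₀, y₁, hy₀, hy₁, ay, by', cy, hTy⟩ := t.exists_triangle y 0 1 (by omega)
  have hy₁' : t.ge 2 (y₁⟦(-1:ℤ)⟧) := t.ge_shift 1 (-1) 2 (by omega) _ hy₁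
  have hTy' := inv_rot_of_distTriang _ hTy
  have hy₀ge : t.ge 0 y₀ :=
    aux_ge_ext t 0 _ hTy' (t.ge_antitone (by omega : (0:ℤ) ≤ 2) _ hy₁') hy
  constructor
  · intro c hc
    have h1 : c ≫ by' = 0 := aux_zero t _ 0 1 (by omega) hb hy₁
    obtain ⟨c₀, hc₀'⟩ : ∃ c₀ : b' ⟶ y₀, c = c₀ ≫ ay :=
      Triangle.coyoneda_exact₂ _ hTy c h1
    obtain ⟨ζ, hζ⟩ : ∃ ζ : u' ⟶ y₁⟦(-1:ℤ)⟧,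
        μ' ≫ c₀ = ζ ≫ (Triangle.mk ay by' cy).invRotate.mor₁ :=
      Triangle.coyoneda_exact₂ _ hTy' (μ' ≫ c₀)
        (by show (μ' ≫ c₀) ≫ ay = 0; rw [Category.assoc, ← hc₀']; exact hc)
    have hζ0 : ζ = 0 := aux_zero t ζ 0 2 (by omega) hu hy₁'
    have hμc₀ : μ' ≫ c₀ = 0 := by rw [hζ, hζ0]; exact zero_comp
    obtain ⟨w, hw, hwu⟩ := hcoker y₀ ⟨hy₀, hy₀ge⟩ 0 (by simp)
    have hc₀0 : c₀ = 0 := (hwu c₀ hμc₀).trans (hwu 0 (by simp)).symm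
    rw [hc₀', hc₀0, zero_comp]
  · intro g hg
    have h1 : g ≫ by' = 0 := aux_zero t _ 0 1 (by omega) hu hy₁
    obtain ⟨g₀, hg₀'⟩ : ∃ g₀ : u' ⟶ y₀, g = g₀ ≫ ay :=
      Triangle.coyoneda_exact₂ _ hTy g h1
    obtain ⟨ζ, hζ⟩ : ∃ ζ : m'' ⟶ y₁⟦(-1:ℤ)⟧,
        μ'' ≫ g₀ = ζ ≫ (Triangle.mk ay by' cy).invRotate.mor₁ :=
      Triangle.coyoneda_exact₂ _ hTy' (μ'' ≫ g₀)
        (by show (μ'' ≫ g₀) ≫ ay = 0; rw [Category.assoc, ← hg₀']; exact hg)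
    have hζ0 : ζ = 0 := aux_zero t ζ 0 2 (by omega) hm hy₁'
    have hμg₀ : μ'' ≫ g₀ = 0 := by rw [hζ, hζ0]; exact zero_comp
    obtain ⟨w, hw, -⟩ := hcoker y₀ ⟨hy₀, hy₀ge⟩ g₀ hμg₀
    exact ⟨w ≫ ay, by rw [← Category.assoc, hw, ← hg₀']⟩

end Aux

/-- Abstract t-structure form of the octahedron lemma identifying `f` with
`τ^{≥0} e`: given heart objects `u'`, `u''`, `m''`, a distinguished triangle
`Σ^{-n}u'' ⊕ m'' ⟶(φ'', μ'') u' ⟶ e ⟶ Σ(Σ^{-n}u'' ⊕ m'')`, and a morphism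
`μ' : u' ⟶ b'` which is a cokernel of `μ''` in the heart, every distinguished
triangle `Σ^{-n}u'' ⟶μ'∘φ'' b' ⟶ f ⟶ Σ^{1-n}u''` has `f ≅ τ^{≥0} e`. -/
theorem third_object_iso_truncation
    {D : Type*} [Category D] [Preadditive D] [HasZeroObject D] [HasShift D ℤ]
    [∀ n : ℤ, (shiftFunctor D n).Additive] [Pretriangulated D] [IsTriangulated D]
    [HasBinaryBiproducts D]
    (t : TStructure D)
    (n : ℕ) (hn : 1 ≤ n)
    (u' u'' m'' : D)
    -- `u'`, `u''`, `m''` are objects of the heart `H = D^{≤0} ∩ D^{≥0}`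
    (hu' : t.le 0 u' ∧ t.ge 0 u') (hu'' : t.le 0 u'' ∧ t.ge 0 u'')
    (hm'' : t.le 0 m'' ∧ t.ge 0 m'')
    -- the given distinguished triangle `Σ^{-n}u'' ⊕ m'' ⟶ u' ⟶ e ⟶ Σ(Σ^{-n}u'' ⊕ m'')`
    (φ'' : (u''⟦(-(n : ℤ))⟧) ⟶ u') (μ'' : m'' ⟶ u')
    (e : D) (ε : u' ⟶ e) (δ : e ⟶ ((u''⟦(-(n : ℤ))⟧) ⊞ m'')⟦(1 : ℤ)⟧)
    (hTe : Triangle.mk (biprod.desc φ'' μ'') ε δ ∈ distTriang D)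
    -- `μ' : u' ⟶ b'` is a cokernel of `μ''` computed in the heart
    (b' : D) (hb' : t.le 0 b' ∧ t.ge 0 b') (μ' : u' ⟶ b')
    (hcomp : μ'' ≫ μ' = 0)
    (hcoker : ∀ (z : D), (t.le 0 z ∧ t.ge 0 z) → ∀ (g : u' ⟶ z), μ'' ≫ g = 0 →
      ∃! h : b' ⟶ z, μ' ≫ h = g)
    -- a truncation triangle for `e`: `τ^{≤-1}e = e₁`, `τ^{≥0}e = e₀`
    (e₁ e₀ : D) (α : e₁ ⟶ e) (η : e ⟶ e₀) (β : e₀ ⟶ e₁⟦(1 : ℤ)⟧)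
    (he₁ : t.le (-1) e₁) (he₀ : t.ge 0 e₀)
    (hTtrunc : Triangle.mk α η β ∈ distTriang D)
    -- any distinguished triangle `Σ^{-n}u'' ⟶μ'∘φ'' b' ⟶ f ⟶ Σ^{1-n}u''`
    (f : D) (γ : b' ⟶ f) (ω : f ⟶ ((u''⟦(-(n : ℤ))⟧)⟦(1 : ℤ)⟧))
    (hTf : Triangle.mk (φ'' ≫ μ') γ ω ∈ distTriang D) :
    Nonempty (f ≅ e₀) := by
  -- choose cones on `φ''` and on `μ'`
  obtain ⟨c', π, π'', hc'⟩ := distinguished_cocone_triangle φ''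
  obtain ⟨k, σ, ρ, hk⟩ := distinguished_cocone_triangle μ'
  -- the split triangle on the biproduct
  have hsplit : Triangle.mk (biprod.inl : u''⟦(-(n:ℤ))⟧ ⟶ u''⟦(-(n:ℤ))⟧ ⊞ m'')
      biprod.snd 0 ∈ distTriang D := binaryBiproductTriangle_distinguished _ _
  -- first octahedron, over `biprod.inl ≫ biprod.desc φ'' μ'' = φ''`
  obtain ⟨p, s, o1c1, o1c2, o1c3, o1c4, o1mem⟩ :=
    someOctahedron (comm := biprod.inl_desc φ'' μ'') hsplit hTe hc'
  -- second octahedron, over `φ'' ≫ μ'`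
  obtain ⟨v, tm, o2c1, o2c2, o2c3, o2c4, o2mem⟩ :=
    someOctahedron (comm := rfl) hc' hk hTf
  -- `p = μ'' ≫ π`
  have hp : p = μ'' ≫ π := by
    simpa using congrArg (fun x => biprod.inr ≫ x) o1c1
  have hpv : p ≫ v = 0 := by
    rw [hp, Category.assoc, o2c1, ← Category.assoc, hcomp, zero_comp]
  -- the canonical map `h : e ⟶ f`
  obtain ⟨h, hvh⟩ : ∃ h : e ⟶ f, v = s ≫ h := Triangle.yoneda_exact₂ _ o1mem v hpv
  have heh : ε ≫ h = μ' ≫ γ := by rw [← o1c3, Category.assoc, ← hvh, o2c1]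
  -- `f ∈ D^{≥ 0}`
  have hfge : t.ge 0 f := by
    have h1 : t.ge ((n:ℤ) - 1) ((u''⟦(-(n:ℤ))⟧)⟦(1:ℤ)⟧) :=
      t.ge_shift (n:ℤ) 1 ((n:ℤ)-1) (by omega) _
        (t.ge_shift 0 (-(n:ℤ)) (n:ℤ) (by omega) _ hu''.2)
    exact aux_ge_ext t 0 _ (rot_of_distTriang _ hTf) hb'.2
      (t.ge_antitone (by omega : (0:ℤ) ≤ (n:ℤ) - 1) _ h1)
  -- the two consequences of the cokernel property
  have inj := fun (y : D) (hy : t.ge 0 y) =>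
    (aux_coker t hm''.1 hu'.1 hb'.1 hcoker y hy).1
  have surj := fun (y : D) (hy : t.ge 0 y) =>
    (aux_coker t hm''.1 hu'.1 hb'.1 hcoker y hy).2
  -- composition with h is injective on maps to `D^{≥0}`
  have hInj : ∀ (y : D), t.ge 0 y → ∀ (qh : f ⟶ y), h ≫ qh = 0 → qh = 0 := by
    intro y hy qh hqh
    have hv : v ≫ qh = 0 := by rw [hvh, Category.assoc, hqh, comp_zero]
    obtain ⟨r, hr⟩ : ∃ r : k ⟶ y, qh = tm ≫ r := Triangle.yoneda_exact₂ _ o2mem qh hv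
    have hgq : γ ≫ qh = σ ≫ r := by rw [hr, ← Category.assoc, o2c3]
    have hμgq : μ' ≫ (γ ≫ qh) = 0 := by
      rw [← Category.assoc, ← heh, Category.assoc, hqh, comp_zero]
    have hγq : γ ≫ qh = 0 := inj y hy _ hμgq
    have hσr : σ ≫ r = 0 := by rw [← hgq]; exact hγq
    obtain ⟨r', hr2⟩ : ∃ r' : u'⟦(1:ℤ)⟧ ⟶ y, r = ρ ≫ r' :=
      Triangle.yoneda_exact₃ _ hk r hσr
    have hr'0 : r' = 0 := aux_zero t r' (-1) 0 (by omega)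
      (t.le_shift 0 1 (-1) (by omega) _ hu'.1) hy
    rw [hr, hr2, hr'0, comp_zero, comp_zero]
  -- composition with h is surjective on maps to `D^{≥0}`
  have hSurj : ∀ (y : D), t.ge 0 y → ∀ (q : e ⟶ y), ∃ qh : f ⟶ y, h ≫ qh = q := by
    intro y hy q
    have hμε0 : μ'' ≫ ε = 0 := by
      have h0 : biprod.desc φ'' μ'' ≫ ε = 0 := comp_distTriang_mor_zero₁₂ _ hTe
      rw [← biprod.inr_desc φ'' μ'', Category.assoc, h0, comp_zero]
    have hφε0 : φ'' ≫ ε = 0 := by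
      have h0 : biprod.desc φ'' μ'' ≫ ε = 0 := comp_distTriang_mor_zero₁₂ _ hTe
      rw [← biprod.inl_desc φ'' μ'', Category.assoc, h0, comp_zero]
    have hμε : μ'' ≫ (ε ≫ q) = 0 := by rw [← Category.assoc, hμε0, zero_comp]
    obtain ⟨β', hβ'⟩ := surj y hy (ε ≫ q) hμε
    have hφβ : (φ'' ≫ μ') ≫ β' = 0 := by
      rw [Category.assoc, hβ', ← Category.assoc, hφε0, zero_comp]
    obtain ⟨qh₀, hq0⟩ : ∃ qh₀ : f ⟶ y, β' = γ ≫ qh₀ :=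
      Triangle.yoneda_exact₂ _ hTf β' hφβ
    have hεd : ε ≫ (h ≫ qh₀ - q) = 0 := by
      have h1 : ε ≫ h ≫ qh₀ = ε ≫ q := by
        rw [← Category.assoc, heh, Category.assoc, ← hq0, hβ']
      rw [Preadditive.comp_sub, h1, sub_self]
    obtain ⟨d', hd⟩ : ∃ d' : ((u''⟦(-(n:ℤ))⟧) ⊞ m'')⟦(1:ℤ)⟧ ⟶ y,
        h ≫ qh₀ - q = δ ≫ d' := Triangle.yoneda_exact₃ _ hTe (h ≫ qh₀ - q) hεd
    have hinr : (biprod.inr : m'' ⟶ u''⟦(-(n:ℤ))⟧ ⊞ m'')⟦(1:ℤ)⟧' ≫ d' = 0 :=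
      aux_zero t _ (-1) 0 (by omega) (t.le_shift 0 1 (-1) (by omega) _ hm''.1) hy
    have hd'decomp : d' = biprod.fst⟦(1:ℤ)⟧' ≫ (biprod.inl⟦(1:ℤ)⟧' ≫ d') := by
      have htot : (biprod.fst ≫ biprod.inl + biprod.snd ≫ biprod.inr :
          u''⟦(-(n:ℤ))⟧ ⊞ m'' ⟶ u''⟦(-(n:ℤ))⟧ ⊞ m'') = 𝟙 _ := biprod.total
      have h2 := congrArg
        (fun (x : u''⟦(-(n:ℤ))⟧ ⊞ m'' ⟶ u''⟦(-(n:ℤ))⟧ ⊞ m'') => x⟦(1:ℤ)⟧' ≫ d') htot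
      rw [Functor.map_add, Functor.map_comp, Functor.map_comp, CategoryTheory.Functor.map_id,
        Preadditive.add_comp, Category.id_comp, Category.assoc, Category.assoc,
        hinr, comp_zero, add_zero] at h2
      exact h2.symm
    have hsD : s ≫ (h ≫ ω - δ ≫ biprod.fst⟦(1:ℤ)⟧') = 0 := by
      have h1 : s ≫ h ≫ ω = π'' := by rw [← Category.assoc, ← hvh, o2c2]
      have h2 : s ≫ δ ≫ biprod.fst⟦(1:ℤ)⟧' = π'' := by
        rw [← Category.assoc, ← o1c4, Category.assoc, ← Functor.map_comp,
          biprod.inl_fst, CategoryTheory.Functor.map_id, Category.comp_id]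
      rw [Preadditive.comp_sub, h1, h2, sub_self]
    obtain ⟨ξ, hξ⟩ : ∃ ξ : m''⟦(1:ℤ)⟧ ⟶ (u''⟦(-(n:ℤ))⟧)⟦(1:ℤ)⟧,
        h ≫ ω - δ ≫ biprod.fst⟦(1:ℤ)⟧' = (δ ≫ biprod.snd⟦(1:ℤ)⟧') ≫ ξ :=
      Triangle.yoneda_exact₃ _ o1mem (h ≫ ω - δ ≫ biprod.fst⟦(1:ℤ)⟧') hsD
    have hξa : ξ ≫ (biprod.inl⟦(1:ℤ)⟧' ≫ d') = 0 :=
      aux_zero t _ (-1) 0 (by omega) (t.le_shift 0 1 (-1) (by omega) _ hm''.1) hy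
    have hhω : h ≫ ω = δ ≫ biprod.fst⟦(1:ℤ)⟧' + (δ ≫ biprod.snd⟦(1:ℤ)⟧') ≫ ξ := by
      rw [← hξ]; abel
    refine ⟨qh₀ - ω ≫ (biprod.inl⟦(1:ℤ)⟧' ≫ d'), ?_⟩
    have key : (h ≫ ω) ≫ (biprod.inl⟦(1:ℤ)⟧' ≫ d') = h ≫ qh₀ - q := by
      rw [hhω, Preadditive.add_comp]
      have t1 : (δ ≫ biprod.fst⟦(1:ℤ)⟧') ≫ (biprod.inl⟦(1:ℤ)⟧' ≫ d') = δ ≫ d' := by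
        rw [Category.assoc, ← hd'decomp]
      have t2 : ((δ ≫ biprod.snd⟦(1:ℤ)⟧') ≫ ξ) ≫ (biprod.inl⟦(1:ℤ)⟧' ≫ d') = 0 := by
        rw [Category.assoc, hξa, comp_zero]
      rw [t1, t2, add_zero, ← hd]
    rw [Preadditive.comp_sub, ← Category.assoc, key]
    abel
  -- `h` factors through `e₀`
  have hα : α ≫ h = 0 := aux_zero t _ (-1) 0 (by omega) he₁ hfge
  obtain ⟨h₀, hh₀⟩ : ∃ h₀ : e₀ ⟶ f, h = η ≫ h₀ :=
    Triangle.yoneda_exact₂ _ hTtrunc h hα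
  obtain ⟨h₁, hh₁⟩ := hSurj e₀ he₀ η
  have hinj' : ∀ (qb : e₀ ⟶ e₀), η ≫ qb = 0 → qb = 0 := by
    intro qb hqb
    obtain ⟨ζ, hζ⟩ : ∃ ζ : e₁⟦(1:ℤ)⟧ ⟶ e₀, qb = β ≫ ζ :=
      Triangle.yoneda_exact₃ _ hTtrunc qb hqb
    have hζ0 : ζ = 0 := aux_zero t ζ (-2) 0 (by omega)
      (t.le_shift (-1) 1 (-2) (by omega) _ he₁) he₀
    rw [hζ, hζ0, comp_zero]
  have c1 : h₀ ≫ h₁ = 𝟙 e₀ := by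
    have hz : η ≫ (h₀ ≫ h₁ - 𝟙 e₀) = 0 := by
      rw [Preadditive.comp_sub, ← Category.assoc, ← hh₀, hh₁, Category.comp_id, sub_self]
    have := hinj' _ hz
    rwa [sub_eq_zero] at this
  have c2 : h₁ ≫ h₀ = 𝟙 f := by
    have hz : h ≫ (h₁ ≫ h₀ - 𝟙 f) = 0 := by
      rw [Preadditive.comp_sub, ← Category.assoc, hh₁, Category.comp_id, ← hh₀, sub_self]
    have := hInj f hfge _ hz
    rwa [sub_eq_zero] at this
  exact ⟨{ hom := h₁, inv := h₀, hom_inv_id := c2, inv_hom_id := c1 }⟩
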